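/- Let n ≥ 2. In the cyclotomic KLR algebra R_n, the set {e(i) : i ∈ I_n, e(i) ≠ 0} is a complete set of primitive pairwise orthogonal idempotents: the elements e(i) are idempotent, pairwise orthogonal (e(i)e(j) = 0 for i ≠ j), their sum equals 1, and each nonzero e(i) is primitive, i.e. it cannot be written as f₁ + f₂ with f₁, f₂ nonzero idempotents of R_n satisfying f₁f₂ = f₂f₁ = 0. -/

import Mathlib

open scoped BigOperators

/-- `I_n`: the sequences `(i_1,…,i_n)` of elements of `ZMod n` that are permutations of
`(0,1,…,n−1)`, encoded as bijections `Fin n → ZMod n` (position `k : Fin n` is the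
0-based version of the paper's position `k+1`). -/
def KLRSeq (n : ℕ) : Type := {f : Fin n → ZMod n // Function.Bijective f}

instance (n : ℕ) : Finite (KLRSeq n) := by
  unfold KLRSeq
  rcases Nat.eq_zero_or_pos n with h | h
  · subst h
    have : IsEmpty {f : Fin 0 → ZMod 0 // Function.Bijective f} := by
      constructor
      rintro ⟨f, hf⟩
      obtain ⟨x, -⟩ := hf.2 0
      exact x.elim0
    infer_instance
  · haveI : NeZero n := ⟨by omega⟩
    infer_instance

noncomputable instance (n : ℕ) : Fintype (KLRSeq n) := Fintype.ofFinite _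

noncomputable instance (n : ℕ) : DecidableEq (KLRSeq n) := Classical.decEq _

/-- Generators of the KLR algebra: idempotents `e(i)`, dots `y_k`, crossings `ψ_k`. -/
inductive KLRGen (n : ℕ) : Type
  | e : KLRSeq n → KLRGen n
  | y : Fin n → KLRGen n
  | psi : Fin (n - 1) → KLRGen n

/-- The free algebra on the KLR generators. -/
abbrev KLRFree (K : Type) [Field K] (n : ℕ) := FreeAlgebra K (KLRGen n)

namespace KLR

/-- `e(i)` in the free algebra. -/
def E (K : Type) [Field K] {n : ℕ} (i : KLRSeq n) : KLRFree K n :=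
  FreeAlgebra.ι K (KLRGen.e i)

/-- `y_k` in the free algebra. -/
def Y (K : Type) [Field K] {n : ℕ} (k : Fin n) : KLRFree K n :=
  FreeAlgebra.ι K (KLRGen.y k)

/-- `ψ_k` in the free algebra. -/
def P (K : Type) [Field K] {n : ℕ} (k : Fin (n - 1)) : KLRFree K n :=
  FreeAlgebra.ι K (KLRGen.psi k)

/-- The first strand position crossed by `ψ_k`. -/
def pos0 {n : ℕ} (k : Fin (n - 1)) : Fin n := ⟨k.val, by have := k.isLt; omega⟩

/-- The second strand position crossed by `ψ_k`. -/
def pos1 {n : ℕ} (k : Fin (n - 1)) : Fin n := ⟨k.val + 1, by have := k.isLt; omega⟩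

/-- The sequence `s_k · i`, with entries `k` and `k+1` swapped. -/
def swapSeq {n : ℕ} (k : Fin (n - 1)) (i : KLRSeq n) : KLRSeq n :=
  ⟨i.1 ∘ Equiv.swap (pos0 k) (pos1 k), i.2.comp (Equiv.swap _ _).bijective⟩

/-- The right-hand side of the quadratic relation `ψ_k² e(i) = …`, depending on how the
colors `i_k` and `i_{k+1}` are related in the quiver of affine type A on `ZMod n`
(`a → b` iff `b = a + 1` and `a ≠ b + 1`, etc.). -/
noncomputable def quadTerm (K : Type) [Field K] {n : ℕ} (k : Fin (n - 1)) (i : KLRSeq n) :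
    KLRFree K n :=
  let a := i.1 (pos0 k)
  let b := i.1 (pos1 k)
  if b = a + 1 ∧ a = b + 1 then
    (Y K (pos1 k) - Y K (pos0 k)) * ((Y K (pos0 k) - Y K (pos1 k)) * E K i)
  else if b = a + 1 ∧ a ≠ b + 1 then (Y K (pos1 k) - Y K (pos0 k)) * E K i
  else if a = b + 1 ∧ b ≠ a + 1 then (Y K (pos0 k) - Y K (pos1 k)) * E K i
  else E K i

/-- The defining relations of the cyclotomic KLR algebra `R_n` (for `Λ = Λ_0`):
the KLR relations together with the cyclotomic relations `y_1 e(i) = 0` (if `i_1 = 0`) and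
`e(i) = 0` (if `i_1 ≠ 0`). -/
inductive Rel (K : Type) [Field K] (n : ℕ) : KLRFree K n → KLRFree K n → Prop
  | idem (i j : KLRSeq n) : Rel K n (E K i * E K j) (if i = j then E K i else 0)
  | sum_eq_one : Rel K n (∑ i : KLRSeq n, E K i) 1
  | ye (k : Fin n) (i : KLRSeq n) : Rel K n (Y K k * E K i) (E K i * Y K k)
  | psie (k : Fin (n - 1)) (i : KLRSeq n) :
      Rel K n (P K k * E K i) (E K (swapSeq k i) * P K k)
  | yy (k l : Fin n) : Rel K n (Y K k * Y K l) (Y K l * Y K k)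
  | psiy (k : Fin (n - 1)) (l : Fin n) (h : l.val ≠ k.val ∧ l.val ≠ k.val + 1) :
      Rel K n (P K k * Y K l) (Y K l * P K k)
  | psipsi (k l : Fin (n - 1)) (h : k.val + 1 < l.val ∨ l.val + 1 < k.val) :
      Rel K n (P K k * P K l) (P K l * P K k)
  | psiy1 (k : Fin (n - 1)) (i : KLRSeq n) :
      Rel K n (P K k * (Y K (pos1 k) * E K i)) (Y K (pos0 k) * (P K k * E K i))
  | ypsi (k : Fin (n - 1)) (i : KLRSeq n) :
      Rel K n (Y K (pos1 k) * (P K k * E K i)) (P K k * (Y K (pos0 k) * E K i))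
  | sq (k : Fin (n - 1)) (i : KLRSeq n) :
      Rel K n (P K k * (P K k * E K i)) (quadTerm K k i)
  | braid (k : Fin (n - 1)) (h : k.val + 1 < n - 1) (i : KLRSeq n) :
      Rel K n (P K k * (P K ⟨k.val + 1, h⟩ * (P K k * E K i)))
              (P K ⟨k.val + 1, h⟩ * (P K k * (P K ⟨k.val + 1, h⟩ * E K i)))
  | cyc0 (hn : 0 < n) (i : KLRSeq n) (h : i.1 ⟨0, hn⟩ = 0) :
      Rel K n (Y K ⟨0, hn⟩ * E K i) 0
  | cyc1 (hn : 0 < n) (i : KLRSeq n) (h : i.1 ⟨0, hn⟩ ≠ 0) :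
      Rel K n (E K i) 0

end KLR

/-- The cyclotomic KLR algebra `R_n` (quiver of affine type A on `ZMod n`, `α` the sum of
all simple roots, `Λ = Λ_0`): the quotient of the free algebra on the generators by the
two-sided ideal generated by the relation differences and the cyclotomic generators. -/
abbrev CKLR (K : Type) [Field K] (n : ℕ) := RingQuot (KLR.Rel K n)

namespace KLR

/-- The quotient map from the free algebra to `R_n`. -/
noncomputable def mk (K : Type) [Field K] (n : ℕ) : KLRFree K n →ₐ[K] CKLR K n :=
  RingQuot.mkAlgHom K (Rel K n)

/-- The idempotent `e(i)` in `R_n`. -/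
noncomputable def e (K : Type) [Field K] {n : ℕ} (i : KLRSeq n) : CKLR K n := mk K n (E K i)

/-- The dot `y_k` in `R_n`. -/
noncomputable def y (K : Type) [Field K] {n : ℕ} (k : Fin n) : CKLR K n := mk K n (Y K k)

/-- The crossing `ψ_k` in `R_n`. -/
noncomputable def p (K : Type) [Field K] {n : ℕ} (k : Fin (n - 1)) : CKLR K n := mk K n (P K k)

end KLR

namespace KLRperm
open KLR


variable {n : ℕ}

/-- The adjacent transposition associated to a letter. -/
def sw (a : Fin (n - 1)) : Equiv.Perm (Fin n) := Equiv.swap (pos0 a) (pos1 a)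

/-- The permutation of a word (head letter acts rightmost-first on positions,
matching `ψ_{k₁} ⋯ ψ_{k_r} e(i) = e(i ∘ s_{k₁} ⋯ ): τ(k::c) = τ c * s_k`). -/
def wp : List (Fin (n - 1)) → Equiv.Perm (Fin n)
  | [] => 1
  | a :: c => wp c * sw a

@[simp] lemma wp_nil : wp ([] : List (Fin (n-1))) = 1 := rfl
@[simp] lemma wp_cons (a : Fin (n-1)) (c : List (Fin (n-1))) : wp (a :: c) = wp c * sw a := rfl

lemma pos0_lt_pos1 (a : Fin (n-1)) : pos0 a < pos1 a := by
  simp [pos0, pos1, Fin.lt_def]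

@[simp] lemma sw_sw (a : Fin (n-1)) : sw a * sw a = 1 := Equiv.swap_mul_self _ _

@[simp] lemma sw_apply_self (a : Fin (n-1)) (x : Fin n) : sw a (sw a x) = x :=
  Equiv.swap_apply_self _ _ _

/-- inversion set -/
noncomputable def invs (σ : Equiv.Perm (Fin n)) : Finset (Fin n × Fin n) :=
  Finset.univ.filter fun x => x.1 < x.2 ∧ σ x.2 < σ x.1

noncomputable def len (σ : Equiv.Perm (Fin n)) : ℕ := (invs σ).card

lemma mem_invs {σ : Equiv.Perm (Fin n)} {x : Fin n × Fin n} :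
    x ∈ invs σ ↔ x.1 < x.2 ∧ σ x.2 < σ x.1 := by
  classical simp [invs]

/-- The key order fact: `sw a` preserves the order of any pair other than
`(pos0 a, pos1 a)`. -/
lemma sw_lt {a : Fin (n-1)} {p q : Fin n} (hpq : p < q) (hne : (p, q) ≠ (pos0 a, pos1 a)) :
    sw a p < sw a q := by
  have hA : (pos0 a : Fin n).val = a.val := rfl
  have hB : (pos1 a : Fin n).val = a.val + 1 := rfl
  by_cases hp0 : p = pos0 a
  · subst hp0
    have hq1 : q ≠ pos1 a := by rintro rfl; exact hne rfl
    have hq0 : q ≠ pos0 a := (ne_of_gt hpq)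
    rw [show sw a (pos0 a) = pos1 a from Equiv.swap_apply_left _ _,
      show sw a q = q from Equiv.swap_apply_of_ne_of_ne hq0 hq1]
    have h1 : (pos0 a : Fin n).val < q.val := hpq
    have h2 : q.val ≠ a.val + 1 := fun h => hq1 (Fin.ext (by rw [h, hB]))
    exact Fin.lt_def.mpr (by rw [hB]; omega)
  · by_cases hp1 : p = pos1 a
    · subst hp1
      have hq0 : q ≠ pos0 a := by
        intro h; subst h; exact absurd (lt_trans (pos0_lt_pos1 a) hpq) (lt_irrefl _)
      have hq1 : q ≠ pos1 a := (ne_of_gt hpq)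
      rw [show sw a (pos1 a) = pos0 a from Equiv.swap_apply_right _ _,
        show sw a q = q from Equiv.swap_apply_of_ne_of_ne hq0 hq1]
      exact lt_trans (pos0_lt_pos1 a) hpq
    · rw [show sw a p = p from Equiv.swap_apply_of_ne_of_ne hp0 hp1]
      by_cases hq0 : q = pos0 a
      · subst hq0
        rw [show sw a (pos0 a) = pos1 a from Equiv.swap_apply_left _ _]
        exact lt_trans hpq (pos0_lt_pos1 a)
      · by_cases hq1 : q = pos1 a
        · subst hq1
          rw [show sw a (pos1 a) = pos0 a from Equiv.swap_apply_right _ _]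
          have h1 : p.val < a.val + 1 := by
            have := Fin.lt_def.mp hpq; rw [hB] at this; omega
          have h2 : p.val ≠ a.val := fun h => hp0 (Fin.ext (by rw [h, hA]))
          exact Fin.lt_def.mpr (by rw [hA]; omega)
        · rw [show sw a q = q from Equiv.swap_apply_of_ne_of_ne hq0 hq1]
          exact hpq

lemma len_mul_sw_of_lt {σ : Equiv.Perm (Fin n)} {a : Fin (n-1)}
    (h : σ (pos0 a) < σ (pos1 a)) : len (σ * sw a) = len σ + 1 := by
  classical
  have hABmem : (pos0 a, pos1 a) ∈ invs (σ * sw a) := by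
    rw [mem_invs]
    refine ⟨pos0_lt_pos1 a, ?_⟩
    simpa [sw, Equiv.Perm.mul_apply] using h
  have hABnot : (pos0 a, pos1 a) ∉ invs σ := by
    rw [mem_invs]
    rintro ⟨-, h2⟩
    exact absurd h (not_lt.mpr (le_of_lt h2))
  have hset : invs (σ * sw a)
      = insert (pos0 a, pos1 a) ((invs σ).image fun x => (sw a x.1, sw a x.2)) := by
    ext ⟨p, q⟩
    simp only [Finset.mem_insert, Finset.mem_image, mem_invs, Prod.mk.injEq, Prod.ext_iff]
    constructor
    · rintro ⟨h1, h2⟩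
      by_cases hAB : (p, q) = (pos0 a, pos1 a)
      · left; exact Prod.mk.injEq .. ▸ (by simpa [Prod.ext_iff] using hAB)
      · right
        refine ⟨(sw a p, sw a q), ⟨sw_lt h1 hAB, ?_⟩, by simp, by simp⟩
        simpa [Equiv.Perm.mul_apply] using h2
    · rintro (⟨h1, h2⟩ | ⟨⟨u, v⟩, ⟨huv, hinv⟩, hu, hv⟩)
      · subst h1; subst h2
        exact (mem_invs.mp hABmem)
      · subst hu; subst hv
        have hne : (u, v) ≠ (pos0 a, pos1 a) := by
          intro heq
          apply hABnot
          rw [← heq]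
          exact mem_invs.mpr ⟨huv, hinv⟩
        refine ⟨sw_lt huv hne, ?_⟩
        simpa [Equiv.Perm.mul_apply] using hinv
  have hinj : Function.Injective (fun x : Fin n × Fin n => (sw a x.1, sw a x.2)) := by
    rintro ⟨u, v⟩ ⟨u', v'⟩ h
    simp only [Prod.mk.injEq] at h
    exact Prod.ext ((Equiv.injective _) h.1) ((Equiv.injective _) h.2)
  have hnotmem : (pos0 a, pos1 a) ∉ (invs σ).image fun x => (sw a x.1, sw a x.2) := by
    rw [Finset.mem_image]
    rintro ⟨⟨u, v⟩, hmem, h⟩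
    simp only [Prod.mk.injEq] at h
    have hu : u = pos1 a := by
      have h1 := congrArg (sw a) h.1
      rw [sw_apply_self] at h1
      rw [h1]; exact Equiv.swap_apply_left _ _
    have hv : v = pos0 a := by
      have h1 := congrArg (sw a) h.2
      rw [sw_apply_self] at h1
      rw [h1]; exact Equiv.swap_apply_right _ _
    subst hu; subst hv
    rw [mem_invs] at hmem
    exact absurd hmem.1 (not_lt.mpr (le_of_lt (pos0_lt_pos1 a)))
  rw [len, len, hset, Finset.card_insert_of_notMem hnotmem,
    Finset.card_image_of_injective _ hinj]

lemma len_mul_sw_of_gt {σ : Equiv.Perm (Fin n)} {a : Fin (n-1)}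
    (h : σ (pos1 a) < σ (pos0 a)) : len (σ * sw a) + 1 = len σ := by
  have h' : (σ * sw a) (pos0 a) < (σ * sw a) (pos1 a) := by
    simpa [sw, Equiv.Perm.mul_apply] using h
  have := len_mul_sw_of_lt h'
  rw [mul_assoc, sw_sw, mul_one] at this
  omega

@[simp] lemma len_one : len (1 : Equiv.Perm (Fin n)) = 0 := by
  classical
  rw [len, Finset.card_eq_zero]
  ext ⟨p, q⟩
  simp only [mem_invs, Finset.notMem_empty, iff_false, not_and]
  intro h
  simpa using (asymm h)

lemma strictMono_eq_one {σ : Equiv.Perm (Fin n)} (h : StrictMono σ) : σ = 1 := by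
  have key : ∀ (τ : Equiv.Perm (Fin n)), StrictMono τ → ∀ m (hm : m < n), m ≤ (τ ⟨m, hm⟩).val := by
    intro τ hτ m
    induction m with
    | zero => intro hm; omega
    | succ m ih =>
      intro hm
      have hm' : m < n := by omega
      have hlt : (⟨m, hm'⟩ : Fin n) < ⟨m + 1, hm⟩ := by simp [Fin.lt_def]
      have h1 := ih hm'
      have h2 := hτ hlt
      rw [Fin.lt_def] at h2
      omega
  have hinv : StrictMono (σ⁻¹ : Equiv.Perm (Fin n)) := by
    intro x y hxy
    rcases lt_trichotomy (σ⁻¹ x) (σ⁻¹ y) with h1 | h1 | h1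
    · exact h1
    · exfalso
      apply ne_of_lt hxy
      have := congrArg σ h1
      simpa using this
    · exfalso
      have h2 := h h1
      simp only [Equiv.Perm.inv_def, Equiv.apply_symm_apply] at h2
      exact absurd hxy (asymm h2)
  ext x
  have h1 := key σ h x.val x.isLt
  have h2 := key σ⁻¹ hinv (σ x).val (σ x).isLt
  simp only [Fin.eta] at h1 h2
  rw [Equiv.Perm.inv_def, Equiv.symm_apply_apply] at h2
  simp only [Equiv.Perm.coe_one, id_eq]
  exact le_antisymm h2 h1

lemma strictMono_of_adj {σ : Equiv.Perm (Fin n)}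
    (h : ∀ a : Fin (n-1), σ (pos0 a) < σ (pos1 a)) : StrictMono σ := by
  have adj : ∀ p q : Fin n, q.val = p.val + 1 → σ p < σ q := by
    intro p q hq
    have hp : p.val < n - 1 := by have := q.isLt; omega
    have hh := h ⟨p.val, hp⟩
    have e0 : pos0 (⟨p.val, hp⟩ : Fin (n-1)) = p := Fin.ext rfl
    have e1 : pos1 (⟨p.val, hp⟩ : Fin (n-1)) = q := Fin.ext (by simp [pos1]; omega)
    rwa [e0, e1] at hh
  have key : ∀ m : ℕ, ∀ p q : Fin n, q.val = p.val + m + 1 → σ p < σ q := by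
    intro m
    induction m with
    | zero => intro p q hq; exact adj p q (by omega)
    | succ m ih =>
      intro p q hq
      have hr : p.val + m + 1 < n := by have := q.isLt; omega
      exact lt_trans (ih p ⟨p.val + m + 1, hr⟩ rfl) (adj ⟨p.val + m + 1, hr⟩ q (by simp; omega))
  intro p q hpq
  have hv := Fin.lt_def.mp hpq
  exact key (q.val - p.val - 1) p q (by omega)

lemma eq_one_of_len_zero {σ : Equiv.Perm (Fin n)} (h : len σ = 0) : σ = 1 := by
  classical
  apply strictMono_eq_one
  intro p q hpq
  rcases lt_trichotomy (σ p) (σ q) with h1 | h1 | h1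
  · exact h1
  · exact absurd (σ.injective h1) (ne_of_lt hpq)
  · exfalso
    have : (p, q) ∈ invs σ := mem_invs.mpr ⟨hpq, h1⟩
    rw [len, Finset.card_eq_zero] at h
    simp [h] at this

lemma exists_descent {σ : Equiv.Perm (Fin n)} (h : σ ≠ 1) :
    ∃ a : Fin (n-1), σ (pos1 a) < σ (pos0 a) := by
  by_contra hc
  push_neg at hc
  apply h
  apply strictMono_eq_one
  apply strictMono_of_adj
  intro a
  rcases lt_trichotomy (σ (pos0 a)) (σ (pos1 a)) with h1 | h1 | h1
  · exact h1
  · exact absurd (σ.injective h1) (ne_of_lt (pos0_lt_pos1 a))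
  · exact absurd h1 (not_lt.mpr (hc a))

lemma len_le_length (c : List (Fin (n-1))) : len (wp c) ≤ c.length := by
  induction c with
  | nil => simp
  | cons a c ih =>
    rw [wp_cons]
    rcases lt_trichotomy ((wp c) (pos0 a)) ((wp c) (pos1 a)) with h1 | h1 | h1
    · rw [len_mul_sw_of_lt h1]; simpa using ih
    · exact absurd ((wp c).injective h1) (ne_of_lt (pos0_lt_pos1 a))
    · have := len_mul_sw_of_gt h1
      simp only [List.length_cons]
      omega

lemma exists_reduced_word (σ : Equiv.Perm (Fin n)) :
    ∃ c : List (Fin (n-1)), wp c = σ ∧ c.length = len σ := by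
  generalize hL : len σ = L
  induction L generalizing σ with
  | zero =>
      refine ⟨[], ?_, by simp [hL]⟩
      rw [eq_one_of_len_zero hL, wp_nil]
  | succ L ih =>
    have hσ : σ ≠ 1 := by rintro rfl; simp at hL
    obtain ⟨a, ha⟩ := exists_descent hσ
    have hlen : len (σ * sw a) = L := by have := len_mul_sw_of_gt ha; omega
    obtain ⟨c, hc1, hc2⟩ := ih (σ * sw a) hlen
    refine ⟨a :: c, ?_, by simp [hc2, hlen]⟩
    rw [wp_cons, hc1, mul_assoc, sw_sw, mul_one]


/-- Braid-commutation equivalence of words. -/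
inductive Bd : List (Fin (n-1)) → List (Fin (n-1)) → Prop
  | refl (c) : Bd c c
  | symm {c d} : Bd c d → Bd d c
  | trans {c d e} : Bd c d → Bd d e → Bd c e
  | cons (a) {c d} : Bd c d → Bd (a :: c) (a :: d)
  | swap (a b) (c) (h : a.val + 1 < b.val ∨ b.val + 1 < a.val) : Bd (a :: b :: c) (b :: a :: c)
  | braid (a b) (c) (h : b.val = a.val + 1) : Bd (a :: b :: a :: c) (b :: a :: b :: c)

/-- A word is reduced if its length equals the Coxeter length of its permutation. -/
def Reduced (c : List (Fin (n-1))) : Prop := c.length = len (wp c)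

lemma reduced_tail {a : Fin (n-1)} {t : List (Fin (n-1))} (h : Reduced (a :: t)) :
    Reduced t ∧ len (wp (a :: t) * sw a) + 1 = len (wp (a :: t)) ∧
      (wp (a :: t)) (pos1 a) < (wp (a :: t)) (pos0 a) := by
  have hwt : wp t = wp (a :: t) * sw a := by rw [wp_cons, mul_assoc, sw_sw, mul_one]
  have hle : len (wp t) ≤ t.length := len_le_length t
  have hlen : t.length + 1 = len (wp (a :: t)) := by
    have h' := h; rw [Reduced, List.length_cons] at h'; omega
  rcases lt_trichotomy ((wp (a :: t)) (pos0 a)) ((wp (a :: t)) (pos1 a)) with h1 | h1 | h1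
  · exfalso
    have h2 := len_mul_sw_of_lt h1
    rw [← hwt] at h2
    omega
  · exact absurd ((wp (a :: t)).injective h1) (ne_of_lt (pos0_lt_pos1 a))
  · have h2 := len_mul_sw_of_gt h1
    rw [← hwt] at h2
    refine ⟨by rw [Reduced]; omega, ?_, h1⟩
    rw [← hwt]; exact h2

lemma sw_comm {a b : Fin (n-1)} (h : a.val + 1 < b.val ∨ b.val + 1 < a.val) :
    sw a * sw b = sw b * sw a := by
  have h0a : (pos0 b : Fin n) ≠ pos0 a := by
    intro hh; have := congrArg Fin.val hh; simp [pos0] at this; omega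
  have h0b : (pos0 b : Fin n) ≠ pos1 a := by
    intro hh; have := congrArg Fin.val hh; simp [pos0, pos1] at this; omega
  have h1a : (pos1 b : Fin n) ≠ pos0 a := by
    intro hh; have := congrArg Fin.val hh; simp [pos0, pos1] at this; omega
  have h1b : (pos1 b : Fin n) ≠ pos1 a := by
    intro hh; have := congrArg Fin.val hh; simp [pos1] at this; omega
  have key : (sw a) * Equiv.swap (pos0 b) (pos1 b) =
      Equiv.swap ((sw a) (pos0 b)) ((sw a) (pos1 b)) * sw a :=
    Equiv.mul_swap_eq_swap_mul _ _ _
  rw [show (sw a) (pos0 b) = pos0 b from Equiv.swap_apply_of_ne_of_ne h0a h0b,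
    show (sw a) (pos1 b) = pos1 b from Equiv.swap_apply_of_ne_of_ne h1a h1b] at key
  exact key

lemma sw_braid {a b : Fin (n-1)} (h : b.val = a.val + 1) :
    sw a * sw b * sw a = sw b * sw a * sw b := by
  have e0 : (pos0 b : Fin n) = pos1 a := Fin.ext (by simp [pos0, pos1, h])
  have hxy : (pos0 a : Fin n) ≠ pos1 a := ne_of_lt (pos0_lt_pos1 a)
  have hxz : (pos0 a : Fin n) ≠ pos1 b := by
    intro hh; have := congrArg Fin.val hh; simp [pos0, pos1] at this; omega
  have hyz : (pos1 a : Fin n) ≠ pos1 b := by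
    intro hh; have := congrArg Fin.val hh; simp [pos1] at this; omega
  rw [sw, sw, e0]
  set x := (pos0 a : Fin n)
  set y := (pos1 a : Fin n)
  set z := (pos1 b : Fin n)
  have lhs : Equiv.swap x y * Equiv.swap y z * Equiv.swap x y
      = Equiv.swap x z := by
    have k1 : Equiv.swap x y * Equiv.swap y z =
        Equiv.swap (Equiv.swap x y y) (Equiv.swap x y z) * Equiv.swap x y :=
      Equiv.mul_swap_eq_swap_mul _ _ _
    rw [Equiv.swap_apply_right, Equiv.swap_apply_of_ne_of_ne (Ne.symm hxz) (Ne.symm hyz)] at k1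
    rw [k1, mul_assoc, Equiv.swap_mul_self, mul_one]
  have rhs : Equiv.swap y z * Equiv.swap x y * Equiv.swap y z
      = Equiv.swap x z := by
    have k1 : Equiv.swap y z * Equiv.swap x y =
        Equiv.swap (Equiv.swap y z x) (Equiv.swap y z y) * Equiv.swap y z :=
      Equiv.mul_swap_eq_swap_mul _ _ _
    rw [Equiv.swap_apply_of_ne_of_ne hxy hxz, Equiv.swap_apply_left] at k1
    rw [k1, mul_assoc, Equiv.swap_mul_self, mul_one]
  rw [lhs, rhs]

lemma fin_ne_of_val {m : ℕ} {x y : Fin m} (h : x.val ≠ y.val) : x ≠ y :=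
  fun hh => h (congrArg Fin.val hh)

@[simp] lemma pos0_val (a : Fin (n-1)) : (pos0 a : Fin n).val = a.val := rfl
@[simp] lemma pos1_val (a : Fin (n-1)) : (pos1 a : Fin n).val = a.val + 1 := rfl

lemma sw_apply_ne (a : Fin (n-1)) {x : Fin n} (h0 : x ≠ pos0 a) (h1 : x ≠ pos1 a) :
    sw a x = x := Equiv.swap_apply_of_ne_of_ne h0 h1

@[simp] lemma sw_mul_cancel (a : Fin (n-1)) (σ : Equiv.Perm (Fin n)) :
    sw a * (sw a * σ) = σ := by rw [← mul_assoc, sw_sw, one_mul]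

@[simp] lemma sw_apply_pos0 (a : Fin (n-1)) : sw a (pos0 a) = pos1 a :=
  Equiv.swap_apply_left _ _

@[simp] lemma sw_apply_pos1 (a : Fin (n-1)) : sw a (pos1 a) = pos0 a :=
  Equiv.swap_apply_right _ _

theorem matsumoto :
    ∀ (m : ℕ) (c₁ c₂ : List (Fin (n-1))), c₁.length ≤ m → Reduced c₁ → Reduced c₂ →
      wp c₁ = wp c₂ → Bd c₁ c₂ := by
  intro m
  induction m with
  | zero =>
    intro c₁ c₂ hm h₁ h₂ hw
    match c₁, hm with
    | [], _ =>
      have : len (wp c₂) = 0 := by rw [← hw, wp_nil, len_one]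
      have h0 : c₂.length = 0 := by rw [Reduced] at h₂; omega
      rw [List.length_eq_zero_iff] at h0
      subst h0
      exact Bd.refl []
  | succ m ih =>
    intro c₁ c₂ hm h₁ h₂ hw
    match c₁, c₂ with
    | [], c₂ =>
      have : len (wp c₂) = 0 := by rw [← hw, wp_nil, len_one]
      have h0 : c₂.length = 0 := by rw [Reduced] at h₂; omega
      rw [List.length_eq_zero_iff] at h0
      subst h0
      exact Bd.refl []
    | a :: t₁, [] =>
      exfalso
      have : len (wp (a :: t₁)) = 0 := by rw [hw, wp_nil, len_one]
      have h0 := h₁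
      rw [Reduced, List.length_cons] at h0
      omega
    | a :: t₁, b :: t₂ =>
      obtain ⟨ht₁, hlen₁, hdesc₁⟩ := reduced_tail h₁
      obtain ⟨ht₂, hlen₂, hdesc₂⟩ := reduced_tail h₂
      rw [← hw] at hlen₂ hdesc₂
      have hwt₁ : wp t₁ = wp (a :: t₁) * sw a := by
        rw [wp_cons, mul_assoc, sw_sw, mul_one]
      have hwt₂ : wp t₂ = wp (a :: t₁) * sw b := by
        rw [hw, wp_cons, mul_assoc, sw_sw, mul_one]
      have hl₁ : t₁.length ≤ m := by
        have := hm; rw [List.length_cons] at this; omega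
      have hL₁ : t₁.length + 1 = len (wp (a :: t₁)) := by
        have := h₁; rw [Reduced, List.length_cons] at this; omega
      have hL₂ : t₂.length + 1 = len (wp (a :: t₁)) := by
        have := h₂; rw [Reduced, List.length_cons, ← hw] at this; omega
      -- the adjacent case, in the orientation `b = a + 1`
      have adj : ∀ (a b : Fin (n-1)) (t₁ t₂ : List (Fin (n-1))), b.val = a.val + 1 →
          Reduced (a :: t₁) → Reduced (b :: t₂) → wp (a :: t₁) = wp (b :: t₂) →
          t₁.length ≤ m → Bd (a :: t₁) (b :: t₂) := by
        clear hdesc₁ hdesc₂ hlen₁ hlen₂ hwt₁ hwt₂ hl₁ hL₁ hL₂ ht₁ ht₂ hw h₁ h₂ hm t₁ t₂ a b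
        intro a b t₁ t₂ hab h₁ h₂ hw hl₁
        obtain ⟨ht₁, hlen₁, hdesc₁⟩ := reduced_tail h₁
        obtain ⟨ht₂, hlen₂, hdesc₂⟩ := reduced_tail h₂
        rw [← hw] at hlen₂ hdesc₂
        have hwt₁ : wp t₁ = wp (a :: t₁) * sw a := by
          rw [wp_cons, mul_assoc, sw_sw, mul_one]
        have hwt₂ : wp t₂ = wp (a :: t₁) * sw b := by
          rw [hw, wp_cons, mul_assoc, sw_sw, mul_one]
        have hL₁ : t₁.length + 1 = len (wp (a :: t₁)) := by
          have := h₁; rw [Reduced, List.length_cons] at this; omega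
        have hL₂ : t₂.length + 1 = len (wp (a :: t₁)) := by
          have := h₂; rw [Reduced, List.length_cons, ← hw] at this; omega
        set σ := wp (a :: t₁) with hσ
        -- positions
        have e10 : (pos0 b : Fin n) = pos1 a := Fin.ext (by simp [hab])
        have hvb : b.val < n - 1 := b.isLt
        -- descent chain : σ(a+2) < σ(a+1) < σ(a)
        have chain1 : σ (pos1 a) < σ (pos0 a) := hdesc₁
        have chain2 : σ (pos1 b) < σ (pos1 a) := by rw [← e10]; exact hdesc₂
        -- σ₁ := σ * sw a has a descent at b
        have hd1 : (σ * sw a) (pos1 b) < (σ * sw a) (pos0 b) := by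
          have f1 : (σ * sw a) (pos0 b) = σ (pos0 a) := by
            rw [Equiv.Perm.mul_apply, e10, sw_apply_pos1]
          have f2 : (σ * sw a) (pos1 b) = σ (pos1 b) := by
            rw [Equiv.Perm.mul_apply, sw_apply_ne a
              (fin_ne_of_val (by simp; omega)) (fin_ne_of_val (by simp; omega))]
          rw [f1, f2]; exact lt_trans chain2 chain1
        have hlen3 : len (σ * sw a * sw b) + 1 = len (σ * sw a) := len_mul_sw_of_gt hd1
        -- σ₂ := σ * sw a * sw b has a descent at a
        have hd2 : (σ * sw a * sw b) (pos1 a) < (σ * sw a * sw b) (pos0 a) := by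
          have f1 : (σ * sw a * sw b) (pos0 a) = σ (pos1 a) := by
            rw [Equiv.Perm.mul_apply, Equiv.Perm.mul_apply, sw_apply_ne b
              (by rw [e10]; exact (ne_of_lt (pos0_lt_pos1 a)))
              (fin_ne_of_val (by simp; omega)), sw_apply_pos0]
          have f2 : (σ * sw a * sw b) (pos1 a) = σ (pos1 b) := by
            rw [Equiv.Perm.mul_apply, Equiv.Perm.mul_apply, ← e10, sw_apply_pos0,
              sw_apply_ne a (fin_ne_of_val (by simp; omega)) (fin_ne_of_val (by simp; omega))]
          rw [f1, f2]; exact chain2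
        have hlen4 : len (σ * sw a * sw b * sw a) + 1 = len (σ * sw a * sw b) :=
          len_mul_sw_of_gt hd2
        obtain ⟨w, hw1, hw2⟩ := exists_reduced_word (σ * sw a * sw b * sw a)
        -- first candidate : b :: a :: w is a reduced word for wp t₁ = σ * sw a
        have cand₁ : wp (b :: a :: w) = σ * sw a := by
          rw [wp_cons, wp_cons, hw1]
          simp [mul_assoc]
        have cand₁red : Reduced (b :: a :: w) := by
          rw [Reduced, cand₁, List.length_cons, List.length_cons, hw2]
          omega
        have bd₁ : Bd t₁ (b :: a :: w) := by
          apply ih t₁ (b :: a :: w) hl₁ ht₁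
          · exact cand₁red
          · rw [hwt₁, cand₁]
        -- second candidate : a :: b :: w is a reduced word for wp t₂ = σ * sw b
        have braidrel' : sw a * (sw b * sw a) = sw b * (sw a * sw b) := by
          have := sw_braid (n := n) hab
          simpa [mul_assoc] using this
        have cand₂ : wp (a :: b :: w) = σ * sw b := by
          rw [wp_cons, wp_cons, hw1]
          simp only [mul_assoc]
          rw [braidrel']
          simp
        have cand₂red : Reduced (a :: b :: w) := by
          rw [Reduced, cand₂, List.length_cons, List.length_cons, hw2]
          omega
        have bd₂ : Bd t₂ (a :: b :: w) := by
          apply ih t₂ (a :: b :: w) (by omega) ht₂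
          · exact cand₂red
          · rw [hwt₂, cand₂]
        exact ((Bd.cons a bd₁).trans (Bd.braid a b w hab)).trans
          ((Bd.cons b bd₂).symm)
      rcases eq_or_ne a b with rfl | hne
      · -- same first letter
        exact Bd.cons a (ih t₁ t₂ hl₁ ht₁ ht₂ (by rw [hwt₁, hwt₂]))
      · have hvne : a.val ≠ b.val := fun hh => hne (Fin.ext hh)
        rcases (by omega : b.val = a.val + 1 ∨ a.val = b.val + 1 ∨
            a.val + 1 < b.val ∨ b.val + 1 < a.val) with hab | hba | hfar
        · exact adj a b t₁ t₂ hab h₁ h₂ hw hl₁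
        · exact (adj b a t₂ t₁ hba h₂ h₁ hw.symm (by omega)).symm
        · -- commuting case
          set σ := wp (a :: t₁) with hσ
          have hfixb0 : sw a (pos0 b) = pos0 b :=
            sw_apply_ne a (fin_ne_of_val (by simp; omega)) (fin_ne_of_val (by simp; omega))
          have hfixb1 : sw a (pos1 b) = pos1 b :=
            sw_apply_ne a (fin_ne_of_val (by simp; omega)) (fin_ne_of_val (by simp; omega))
          have hd1 : (σ * sw a) (pos1 b) < (σ * sw a) (pos0 b) := by
            rw [Equiv.Perm.mul_apply, Equiv.Perm.mul_apply, hfixb0, hfixb1]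
            exact hdesc₂
          have hlen3 : len (σ * sw a * sw b) + 1 = len (σ * sw a) := len_mul_sw_of_gt hd1
          obtain ⟨w, hw1, hw2⟩ := exists_reduced_word (σ * sw a * sw b)
          have cand₁ : wp (b :: w) = σ * sw a := by
            rw [wp_cons, hw1]; simp [mul_assoc]
          have cand₁red : Reduced (b :: w) := by
            rw [Reduced, cand₁, List.length_cons, hw2]; omega
          have bd₁ : Bd t₁ (b :: w) := by
            apply ih t₁ (b :: w) hl₁ ht₁ cand₁red
            rw [hwt₁, cand₁]
          have swcomm : sw (n := n) a * sw b = sw b * sw a := sw_comm hfar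
          have cand₂ : wp (a :: w) = σ * sw b := by
            rw [wp_cons, hw1]
            simp only [mul_assoc]
            rw [show sw (n := n) b * sw a = sw a * sw b from swcomm.symm]
            simp
          have cand₂red : Reduced (a :: w) := by
            rw [Reduced, cand₂, List.length_cons, hw2]; omega
          have bd₂ : Bd t₂ (a :: w) := by
            apply ih t₂ (a :: w) (by omega) ht₂ cand₂red
            rw [hwt₂, cand₂]
          exact ((Bd.cons a bd₁).trans (Bd.swap a b w hfar)).trans ((Bd.cons b bd₂).symm)

end KLRperm


namespace KLRstmt
open KLR

variable {K : Type} [Field K] {n : ℕ}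

/-! ### The defining relations, in the quotient -/

lemma r_idem (i j : KLRSeq n) :
    e K i * e K j = if i = j then e K i else 0 := by
  have h := RingQuot.mkAlgHom_rel K (Rel.idem (K := K) (n := n) i j)
  simp only [map_mul, apply_ite (RingQuot.mkAlgHom K (Rel K n)), map_zero] at h
  simpa [KLR.e, KLR.mk] using h

lemma r_one : (∑ i : KLRSeq n, e K i) = 1 := by
  have h := RingQuot.mkAlgHom_rel K (Rel.sum_eq_one (K := K) (n := n))
  simpa [KLR.e, KLR.mk, map_sum] using h

lemma r_ye (k : Fin n) (i : KLRSeq n) : y K k * e K i = e K i * y K k := by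
  have h := RingQuot.mkAlgHom_rel K (Rel.ye (K := K) (n := n) k i)
  simpa [KLR.e, KLR.y, KLR.mk, map_mul] using h

lemma r_psie (k : Fin (n-1)) (i : KLRSeq n) :
    p K k * e K i = e K (swapSeq k i) * p K k := by
  have h := RingQuot.mkAlgHom_rel K (Rel.psie (K := K) (n := n) k i)
  simpa [KLR.e, KLR.p, KLR.mk, map_mul] using h

lemma r_yy (k l : Fin n) : y K k * y K l = y K l * y K k := by
  have h := RingQuot.mkAlgHom_rel K (Rel.yy (K := K) (n := n) k l)
  simpa [KLR.y, KLR.mk, map_mul] using h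

lemma r_psiy (k : Fin (n-1)) (l : Fin n) (h : l.val ≠ k.val ∧ l.val ≠ k.val + 1) :
    p K k * y K l = y K l * p K k := by
  have h' := RingQuot.mkAlgHom_rel K (Rel.psiy (K := K) (n := n) k l h)
  simpa [KLR.y, KLR.p, KLR.mk, map_mul] using h'

lemma r_psipsi (k l : Fin (n-1)) (h : k.val + 1 < l.val ∨ l.val + 1 < k.val) :
    p K k * p K l = p K l * p K k := by
  have h' := RingQuot.mkAlgHom_rel K (Rel.psipsi (K := K) (n := n) k l h)
  simpa [KLR.p, KLR.mk, map_mul] using h'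

lemma r_psiy1 (k : Fin (n-1)) (i : KLRSeq n) :
    p K k * (y K (pos1 k) * e K i) = y K (pos0 k) * (p K k * e K i) := by
  have h := RingQuot.mkAlgHom_rel K (Rel.psiy1 (K := K) (n := n) k i)
  simpa [KLR.e, KLR.y, KLR.p, KLR.mk, map_mul] using h

lemma r_ypsi (k : Fin (n-1)) (i : KLRSeq n) :
    y K (pos1 k) * (p K k * e K i) = p K k * (y K (pos0 k) * e K i) := by
  have h := RingQuot.mkAlgHom_rel K (Rel.ypsi (K := K) (n := n) k i)
  simpa [KLR.e, KLR.y, KLR.p, KLR.mk, map_mul] using h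

lemma r_sq (k : Fin (n-1)) (i : KLRSeq n) :
    p K k * (p K k * e K i) =
      if i.1 (pos1 k) = i.1 (pos0 k) + 1 ∧ i.1 (pos0 k) = i.1 (pos1 k) + 1 then
        (y K (pos1 k) - y K (pos0 k)) * ((y K (pos0 k) - y K (pos1 k)) * e K i)
      else if i.1 (pos1 k) = i.1 (pos0 k) + 1 ∧ i.1 (pos0 k) ≠ i.1 (pos1 k) + 1 then
        (y K (pos1 k) - y K (pos0 k)) * e K i
      else if i.1 (pos0 k) = i.1 (pos1 k) + 1 ∧ i.1 (pos1 k) ≠ i.1 (pos0 k) + 1 then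
        (y K (pos0 k) - y K (pos1 k)) * e K i
      else e K i := by
  have h := RingQuot.mkAlgHom_rel K (Rel.sq (K := K) (n := n) k i)
  simp only [quadTerm] at h
  split_ifs at h ⊢ <;>
    simpa [KLR.e, KLR.y, KLR.p, KLR.mk, map_mul, map_sub] using h

lemma r_braid (k : Fin (n-1)) (h : k.val + 1 < n - 1) (i : KLRSeq n) :
    p K k * (p K ⟨k.val + 1, h⟩ * (p K k * e K i)) =
      p K ⟨k.val + 1, h⟩ * (p K k * (p K ⟨k.val + 1, h⟩ * e K i)) := by
  have h' := RingQuot.mkAlgHom_rel K (Rel.braid (K := K) (n := n) k h i)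
  simpa [KLR.e, KLR.p, KLR.mk, map_mul] using h'

lemma r_cyc0 (hn : 0 < n) (i : KLRSeq n) (h : i.1 ⟨0, hn⟩ = 0) :
    y K ⟨0, hn⟩ * e K i = 0 := by
  have h' := RingQuot.mkAlgHom_rel K (Rel.cyc0 (K := K) hn i h)
  simpa [KLR.e, KLR.y, KLR.mk, map_mul] using h'

lemma r_cyc1 (hn : 0 < n) (i : KLRSeq n) (h : i.1 ⟨0, hn⟩ ≠ 0) :
    e K i = 0 := by
  have h' := RingQuot.mkAlgHom_rel K (Rel.cyc1 (K := K) hn i h)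
  simpa [KLR.e, KLR.mk] using h'

/-! ### basic consequences -/

lemma e_mul_self (i : KLRSeq n) : e K i * e K i = e K i := by simp [r_idem]

lemma e_mul_ne {i j : KLRSeq n} (h : i ≠ j) : e K i * e K j = 0 := by simp [r_idem, h]

lemma commute_yy (k l : Fin n) : Commute (y K k) (y K l) := r_yy k l

lemma commute_ye (k : Fin n) (i : KLRSeq n) : Commute (y K k) (e K i) := r_ye k i

lemma p_e_slide (k : Fin (n-1)) (i : KLRSeq n) :
    p K k * e K i = e K (swapSeq k i) * (p K k * e K i) := by
  rw [r_psie, ← mul_assoc, e_mul_self]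

lemma y_p_e (k : Fin (n-1)) (l : Fin n) (i : KLRSeq n) :
    y K l * (p K k * e K i) = p K k * (y K (KLRperm.sw k l) * e K i) := by
  rcases eq_or_ne l (pos0 k) with rfl | h0
  · rw [KLRperm.sw_apply_pos0]
    exact (r_psiy1 k i).symm
  · rcases eq_or_ne l (pos1 k) with rfl | h1
    · rw [KLRperm.sw_apply_pos1]
      exact r_ypsi k i
    · rw [KLRperm.sw_apply_ne k h0 h1, ← mul_assoc,
        ← r_psiy k l ⟨fun hh => h0 (Fin.ext hh), fun hh => h1 (Fin.ext hh)⟩, mul_assoc]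

lemma y_eZ_slide (k : Fin (n-1)) (l : Fin n) (j : KLRSeq n) (Z : CKLR K n) :
    y K l * (p K k * (e K j * Z)) = p K k * (e K j * (y K (KLRperm.sw k l) * Z)) := by
  have h := congrArg (· * Z) (y_p_e (K := K) k l j)
  simp only [mul_assoc] at h
  rw [h]
  congr 1
  rw [← mul_assoc, (commute_ye (KLRperm.sw k l) j).eq, mul_assoc]

lemma ypow_eZ_slide (M : ℕ) (k : Fin (n-1)) (l : Fin n) (j : KLRSeq n) (Z : CKLR K n) :
    y K l ^ M * (p K k * (e K j * Z)) = p K k * (e K j * (y K (KLRperm.sw k l) ^ M * Z)) := by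
  induction M generalizing Z with
  | zero => simp
  | succ M ih =>
    rw [pow_succ', pow_succ', mul_assoc, ih, y_eZ_slide, mul_assoc]

lemma commute_ypow_e (k : Fin n) (M : ℕ) (i : KLRSeq n) :
    y K k ^ M * e K i = e K i * y K k ^ M := ((commute_ye k i).pow_left M).eq

lemma pow_mul_zero_of_le {x z : CKLR K n} {N : ℕ} (h : x ^ N * z = 0) {M : ℕ} (hM : N ≤ M) :
    x ^ M * z = 0 := by
  have : x ^ M = x ^ (M - N) * x ^ N := by rw [← pow_add]; congr 1; omega
  rw [this, mul_assoc, h, mul_zero]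

/-! ### cyclotomic consequences: `y₁ = 0`, `ψ₁ = 0`, nilpotency of the dots -/

lemma y0e (hn : 0 < n) (i : KLRSeq n) : y K (⟨0, hn⟩ : Fin n) * e K i = 0 := by
  by_cases h : i.1 ⟨0, hn⟩ = 0
  · exact r_cyc0 hn i h
  · rw [r_cyc1 hn i h, mul_zero]

lemma p0 (hn : 0 < n) (k : Fin (n-1)) (hk : k.val = 0) : p K k = (0 : CKLR K n) := by
  have h1 : p K k = ∑ i : KLRSeq n, p K k * e K i := by
    rw [← Finset.mul_sum, r_one, mul_one]
  rw [h1]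
  apply Finset.sum_eq_zero
  intro i _
  by_cases h : i.1 ⟨0, hn⟩ = 0
  · rw [r_psie]
    have hp0 : (pos0 k : Fin n) = ⟨0, hn⟩ := Fin.ext hk
    have hzero : (swapSeq k i).1 ⟨0, hn⟩ ≠ 0 := by
      have hv : (swapSeq k i).1 ⟨0, hn⟩ = i.1 (pos1 k) := by
        show i.1 ((Equiv.swap (pos0 k) (pos1 k)) ⟨0, hn⟩) = i.1 (pos1 k)
        rw [← hp0, Equiv.swap_apply_left]
      rw [hv]
      intro hcon
      have : (pos1 k : Fin n) = ⟨0, hn⟩ := i.2.1 (by rw [hcon, h])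
      have := congrArg Fin.val this
      simp at this
    rw [r_cyc1 hn _ hzero, zero_mul]
  · rw [r_cyc1 hn i h, mul_zero]

lemma nil_aux (hn2 : 2 ≤ n) :
    ∀ (m : ℕ) (hm : m < n), ∃ N, 0 < N ∧
      ∀ i : KLRSeq n, y K (⟨m, hm⟩ : Fin n) ^ N * e K i = 0 := by
  have hn : 0 < n := by omega
  intro m
  induction m with
  | zero =>
    intro hm
    exact ⟨1, Nat.one_pos, fun i => by rw [pow_one]; exact y0e hn i⟩
  | succ m ih =>
    intro hm
    have hm' : m < n := by omega
    obtain ⟨N, hN0, hN⟩ := ih hm'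
    have hk : m < n - 1 := by omega
    set k : Fin (n-1) := ⟨m, hk⟩ with hkdef
    refine ⟨2 * N + 2, by omega, fun i => ?_⟩
    set yA := y K (pos0 k) with hyA
    set yB := y K (pos1 k) with hyB
    have hN' : ∀ j : KLRSeq n, yA ^ N * e K j = 0 := fun j => hN j
    show yB ^ (2 * N + 2) * e K i = 0
    have hsq := r_sq (K := K) k i
    rw [← hyA, ← hyB] at hsq
    -- key : `yB^M ⬝ ψ² e(i) = 0` for `M ≥ N`
    have key : ∀ M, N ≤ M → yB ^ M * (p K k * (p K k * e K i)) = 0 := by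
      intro M hM
      have hswB : KLRperm.sw k (pos1 k) = pos0 k := KLRperm.sw_apply_pos1 k
      calc yB ^ M * (p K k * (p K k * e K i))
          = yB ^ M * (p K k * (e K (swapSeq k i) * (p K k * e K i))) := by
            rw [← p_e_slide]
        _ = p K k * (e K (swapSeq k i) * (yA ^ M * (p K k * e K i))) := by
            rw [hyB, ypow_eZ_slide, hswB, ← hyA]
        _ = 0 := by
            have h7 : e K (swapSeq k i) * (yA ^ M * (p K k * e K i)) = 0 := by
              rw [← mul_assoc, ← commute_ypow_e,
                pow_mul_zero_of_le (hN' (swapSeq k i)) hM, zero_mul]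
            rw [h7, mul_zero]
    -- main engine, for the single-arrow cases
    have main : (∀ M, N ≤ M → yB ^ M * (yB * e K i) = yB ^ M * (yA * e K i)) →
        yB ^ (2 * N + 2) * e K i = 0 := by
      intro h6
      have hstep : ∀ M, N ≤ M → yB ^ (M + 1) * e K i = yA * (yB ^ M * e K i) := by
        intro M hM
        calc yB ^ (M + 1) * e K i = yB ^ M * (yB * e K i) := by rw [pow_succ, mul_assoc]
          _ = yB ^ M * (yA * e K i) := h6 M hM
          _ = yA * (yB ^ M * e K i) := by
              rw [← mul_assoc, ← mul_assoc, ((commute_yy _ _).pow_right M).symm.eq]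
      have hiter : ∀ t, yB ^ (N + t) * e K i = yA ^ t * (yB ^ N * e K i) := by
        intro t
        induction t with
        | zero => simp
        | succ t iht =>
          have hNt : N + (t + 1) = (N + t) + 1 := by omega
          rw [hNt, hstep (N + t) (by omega), iht, ← mul_assoc, ← pow_succ']
      have h2N : yB ^ (N + N) * e K i = 0 := by
        rw [hiter N, ← mul_assoc, ((commute_yy _ _).pow_pow N N).eq, mul_assoc, hN', mul_zero]
      exact pow_mul_zero_of_le h2N (by omega)
    by_cases h1 : i.1 (pos1 k) = i.1 (pos0 k) + 1 ∧ i.1 (pos0 k) = i.1 (pos1 k) + 1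
    · -- double arrow (forces n = 2) : use ψ₀ = 0 and y₀ = 0
      rw [if_pos h1] at hsq
      have h2 : (2 : ZMod n) = 0 := by
        have ha := h1.2
        rw [h1.1] at ha
        have hb : i.1 (pos0 k) + 2 = i.1 (pos0 k) + 0 := by
          rw [add_zero]
          conv_lhs => rw [show i.1 (pos0 k) + 2 = i.1 (pos0 k) + 1 + 1 by ring]
          exact ha.symm
        exact (add_left_cancel hb)
      have hdvd : n ∣ 2 :=
        (ZMod.natCast_eq_zero_iff 2 n).mp (by push_cast; exact h2)
      have hm0 : m = 0 := by
        have := Nat.le_of_dvd (by norm_num) hdvd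
        omega
      have hp : p K k = 0 := p0 hn k (by simp [hkdef, hm0])
      rw [hp, zero_mul] at hsq
      have hyA0 : yA * e K i = 0 := by
        have hfin : (pos0 k : Fin n) = ⟨0, hn⟩ := Fin.ext (by simp [hkdef, hm0])
        rw [hyA, hfin]
        exact y0e hn i
      have e1 : (yA - yB) * e K i = 0 - yB * e K i := by
        rw [sub_mul, hyA0]
      have e3 : yA * (yB * e K i) = 0 := by
        rw [← mul_assoc, (commute_yy _ _).eq, mul_assoc, hyA0, mul_zero]
      have hsq' := hsq.symm
      rw [e1, mul_sub, mul_zero] at hsq'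
      have h4 := (sub_eq_zero.mp hsq').symm
      rw [sub_mul, e3, sub_zero] at h4
      have h2' : yB ^ 2 * e K i = 0 := by
        rw [pow_two, mul_assoc, h4]
      exact pow_mul_zero_of_le h2' (by omega)
    · rw [if_neg h1] at hsq
      by_cases h2 : i.1 (pos1 k) = i.1 (pos0 k) + 1 ∧ i.1 (pos0 k) ≠ i.1 (pos1 k) + 1
      · rw [if_pos h2] at hsq
        apply main
        intro M hM
        have hd : yB ^ M * (yB * e K i) - yB ^ M * (yA * e K i) = 0 := by
          rw [← mul_sub, ← sub_mul, ← hsq, key M hM]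
        exact sub_eq_zero.mp hd
      · rw [if_neg h2] at hsq
        by_cases h3 : i.1 (pos0 k) = i.1 (pos1 k) + 1 ∧ i.1 (pos1 k) ≠ i.1 (pos0 k) + 1
        · rw [if_pos h3] at hsq
          apply main
          intro M hM
          have hd : yB ^ M * (yA * e K i) - yB ^ M * (yB * e K i) = 0 := by
            rw [← mul_sub, ← sub_mul, ← hsq, key M hM]
          exact (sub_eq_zero.mp hd).symm
        · rw [if_neg h3] at hsq
          have hN2 : yB ^ N * e K i = 0 := by
            conv_lhs => rw [← hsq]
            exact key N le_rfl
          exact pow_mul_zero_of_le hN2 (by omega)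

lemma y_global_nil (hn2 : 2 ≤ n) :
    ∃ N, 0 < N ∧ ∀ k : Fin n, y K k ^ N = (0 : CKLR K n) := by
  have hper : ∀ k : Fin n, ∃ N, 0 < N ∧ y K k ^ N = (0 : CKLR K n) := by
    intro k
    obtain ⟨N, hN0, hN⟩ := nil_aux (K := K) hn2 k.val k.isLt
    refine ⟨N, hN0, ?_⟩
    rw [← mul_one (y K k ^ N), ← r_one, Finset.mul_sum]
    apply Finset.sum_eq_zero
    intro i _
    exact hN i
  choose f hf0 hf using hper
  refine ⟨(Finset.univ.sup f) + 1, Nat.succ_pos _, fun k => ?_⟩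
  have hle : f k ≤ Finset.univ.sup f := Finset.le_sup (Finset.mem_univ k)
  have : y K k ^ (Finset.univ.sup f + 1) =
      y K k ^ (Finset.univ.sup f + 1 - f k) * y K k ^ (f k) := by
    rw [← pow_add]
    congr 1
    omega
  rw [this, hf, mul_zero]

/-! ### monomials `ψ_c y_ls e(i)` and the straightening machinery -/

noncomputable def yL (K : Type) [Field K] {n : ℕ} (ls : List (Fin n)) : CKLR K n :=
  (ls.map (y K)).prod

noncomputable def pL (K : Type) [Field K] {n : ℕ} (c : List (Fin (n-1))) : CKLR K n :=
  (c.map (p K)).prod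

noncomputable def TT (K : Type) [Field K] {n : ℕ} (c : List (Fin (n-1)))
    (ls : List (Fin n)) (i : KLRSeq n) : CKLR K n :=
  pL K c * (yL K ls * e K i)

def act {n : ℕ} : List (Fin (n-1)) → KLRSeq n → KLRSeq n
  | [], i => i
  | k :: c, i => swapSeq k (act c i)

def mIdx {n : ℕ} (c : List (Fin (n-1))) (l : Fin n) : Fin n :=
  c.foldl (fun x k => KLRperm.sw k x) l

@[simp] lemma yL_nil : yL K ([] : List (Fin n)) = 1 := rfl

@[simp] lemma yL_cons (l : Fin n) (ls : List (Fin n)) :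
    yL K (l :: ls) = y K l * yL K ls := by simp [yL]

@[simp] lemma TT_nil (ls : List (Fin n)) (i : KLRSeq n) :
    TT K [] ls i = yL K ls * e K i := by simp [TT, pL]

lemma TT_cons (k : Fin (n-1)) (c : List (Fin (n-1))) (ls : List (Fin n)) (i : KLRSeq n) :
    TT K (k :: c) ls i = p K k * TT K c ls i := by simp [TT, pL, mul_assoc]

lemma commute_e_yL (i : KLRSeq n) (ls : List (Fin n)) : Commute (e K i) (yL K ls) := by
  induction ls with
  | nil => exact Commute.one_right _
  | cons l ls ih => exact (yL_cons (K := K) l ls) ▸ ((commute_ye l i).symm.mul_right ih)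

lemma act_apply (c : List (Fin (n-1))) (i : KLRSeq n) (x : Fin n) :
    (act c i).1 x = i.1 (KLRperm.wp c x) := by
  induction c generalizing x with
  | nil => simp [act, KLRperm.wp]
  | cons k c ih =>
    show (act c i).1 ((Equiv.swap (pos0 k) (pos1 k)) x) = _
    rw [ih]
    rfl

lemma act_fix {c : List (Fin (n-1))} {i : KLRSeq n} (h : act c i = i) :
    KLRperm.wp c = 1 := by
  ext x
  have h1 : (act c i).1 x = i.1 x := by rw [h]
  rw [act_apply] at h1
  simp only [Equiv.Perm.one_apply]
  exact congrArg Fin.val (i.2.1 h1)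

lemma E_slide (c : List (Fin (n-1))) (ls : List (Fin n)) (i : KLRSeq n) :
    e K (act c i) * TT K c ls i = TT K c ls i := by
  induction c with
  | nil =>
    show e K i * TT K [] ls i = TT K [] ls i
    rw [TT_nil, ← mul_assoc, (commute_e_yL i ls).eq, mul_assoc, e_mul_self]
  | cons k c ih =>
    show e K (swapSeq k (act c i)) * TT K (k :: c) ls i = TT K (k :: c) ls i
    calc e K (swapSeq k (act c i)) * TT K (k :: c) ls i
        = e K (swapSeq k (act c i)) * (p K k * (e K (act c i) * TT K c ls i)) := by
          rw [TT_cons, ih]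
      _ = (e K (swapSeq k (act c i)) * (p K k * e K (act c i))) * TT K c ls i := by
          rw [mul_assoc, mul_assoc]
      _ = (p K k * e K (act c i)) * TT K c ls i := by rw [← p_e_slide]
      _ = TT K (k :: c) ls i := by rw [mul_assoc, ih, ← TT_cons]

lemma e_TT (j : KLRSeq n) (c : List (Fin (n-1))) (ls : List (Fin n)) (i : KLRSeq n) :
    e K j * TT K c ls i = if j = act c i then TT K c ls i else 0 := by
  rcases eq_or_ne j (act c i) with rfl | h
  · rw [if_pos rfl]
    exact E_slide c ls i
  · rw [if_neg h]
    conv_lhs => rw [← E_slide c ls i]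
    rw [← mul_assoc, e_mul_ne h, zero_mul]

lemma y_TT (l : Fin n) (c : List (Fin (n-1))) (ls : List (Fin n)) (i : KLRSeq n) :
    y K l * TT K c ls i = TT K c (mIdx c l :: ls) i := by
  induction c generalizing l with
  | nil => rw [TT_nil, TT_nil, yL_cons, mul_assoc]; rfl
  | cons k c ih =>
    calc y K l * TT K (k :: c) ls i
        = y K l * (p K k * (e K (act c i) * TT K c ls i)) := by rw [TT_cons, E_slide]
      _ = p K k * (e K (act c i) * (y K (KLRperm.sw k l) * TT K c ls i)) := by
          rw [y_eZ_slide]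
      _ = p K k * (e K (act c i) * TT K c (mIdx c (KLRperm.sw k l) :: ls) i) := by rw [ih]
      _ = p K k * TT K c (mIdx c (KLRperm.sw k l) :: ls) i := by rw [E_slide]
      _ = TT K (k :: c) (mIdx (k :: c) l :: ls) i := by rw [← TT_cons]; rfl

lemma TT_mul_e (c : List (Fin (n-1))) (ls : List (Fin n)) (j i : KLRSeq n) :
    TT K c ls j * e K i = if j = i then TT K c ls i else 0 := by
  rcases eq_or_ne j i with rfl | h
  · rw [if_pos rfl, TT, mul_assoc, mul_assoc, e_mul_self]
  · rw [if_neg h, TT, mul_assoc, mul_assoc, e_mul_ne h, mul_zero, mul_zero]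

/-- braid-equivalent words give the same element. -/
lemma bd_TT {c d : List (Fin (n-1))} (h : KLRperm.Bd c d) :
    ∀ (ls : List (Fin n)) (i : KLRSeq n), TT K c ls i = TT K d ls i := by
  induction h with
  | refl c => intro ls i; rfl
  | symm _ ih => intro ls i; exact (ih ls i).symm
  | trans _ _ ih1 ih2 => intro ls i; rw [ih1, ih2]
  | cons a _ ih => intro ls i; rw [TT_cons, TT_cons, ih]
  | swap a b c hab =>
    intro ls i
    rw [TT_cons, TT_cons, TT_cons, TT_cons, ← mul_assoc, ← mul_assoc,
      r_psipsi a b hab]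
  | braid a b c hab =>
    intro ls i
    have h' : a.val + 1 < n - 1 := by have := b.isLt; omega
    have hb : b = ⟨a.val + 1, h'⟩ := Fin.ext hab
    calc TT K (a :: b :: a :: c) ls i
        = p K a * (p K b * (p K a * (e K (act c i) * TT K c ls i))) := by
          rw [TT_cons, TT_cons, TT_cons, E_slide]
      _ = (p K a * (p K b * (p K a * e K (act c i)))) * TT K c ls i := by
          simp only [mul_assoc]
      _ = (p K b * (p K a * (p K b * e K (act c i)))) * TT K c ls i := by
          rw [hb, r_braid a h' (act c i)]
      _ = p K b * (p K a * (p K b * (e K (act c i) * TT K c ls i))) := by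
          simp only [mul_assoc]
      _ = TT K (b :: a :: b :: c) ls i := by
          rw [E_slide, ← TT_cons, ← TT_cons, ← TT_cons]

/-- the span of `ψ_d`-leading monomials with fixed `d` and `i`. -/
noncomputable def NS (K : Type) [Field K] {n : ℕ} (d : List (Fin (n-1))) (i : KLRSeq n) :
    Submodule K (CKLR K n) :=
  Submodule.span K {x : CKLR K n | ∃ ls, x = TT K d ls i}

lemma TT_mem_NS (d : List (Fin (n-1))) (ls : List (Fin n)) (i : KLRSeq n) :
    TT K d ls i ∈ NS K d i := Submodule.subset_span ⟨ls, rfl⟩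

lemma y_mul_NS (l : Fin n) {d : List (Fin (n-1))} {i : KLRSeq n} {v : CKLR K n}
    (hv : v ∈ NS K d i) : y K l * v ∈ NS K d i := by
  induction hv using Submodule.span_induction with
  | mem x hx =>
    obtain ⟨ls, rfl⟩ := hx
    rw [y_TT]
    exact TT_mem_NS _ _ _
  | zero => rw [mul_zero]; exact Submodule.zero_mem _
  | add x y hx hy ihx ihy => rw [mul_add]; exact Submodule.add_mem _ ihx ihy
  | smul a x hx ih => rw [mul_smul_comm]; exact Submodule.smul_mem _ _ ih

lemma e_mul_NS {d : List (Fin (n-1))} {i : KLRSeq n} {v : CKLR K n}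
    (hv : v ∈ NS K d i) : e K (act d i) * v ∈ NS K d i := by
  induction hv using Submodule.span_induction with
  | mem x hx =>
    obtain ⟨ls, rfl⟩ := hx
    rw [E_slide]
    exact TT_mem_NS _ _ _
  | zero => rw [mul_zero]; exact Submodule.zero_mem _
  | add x y hx hy ihx ihy => rw [mul_add]; exact Submodule.add_mem _ ihx ihy
  | smul a x hx ih => rw [mul_smul_comm]; exact Submodule.smul_mem _ _ ih

lemma sq_TT (k : Fin (n-1)) (d : List (Fin (n-1))) (ls : List (Fin n)) (i : KLRSeq n) :
    p K k * (p K k * TT K d ls i) ∈ NS K d i := by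
  have h1 : p K k * (p K k * TT K d ls i)
      = (p K k * (p K k * e K (act d i))) * TT K d ls i := by
    conv_lhs => rw [← E_slide d ls i]
    simp only [mul_assoc]
  rw [h1, r_sq]
  have hv : e K (act d i) * TT K d ls i ∈ NS K d i :=
    e_mul_NS (TT_mem_NS _ _ _)
  split_ifs with hc1 hc2 hc3
  · have h2 : ((y K (pos1 k) - y K (pos0 k)) * ((y K (pos0 k) - y K (pos1 k)) * e K (act d i)))
        * TT K d ls i
        = (y K (pos1 k) - y K (pos0 k)) *
          ((y K (pos0 k) - y K (pos1 k)) * (e K (act d i) * TT K d ls i)) := by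
      simp only [mul_assoc]
    rw [h2]
    have hv1 : (y K (pos0 k) - y K (pos1 k)) * (e K (act d i) * TT K d ls i) ∈ NS K d i := by
      rw [sub_mul]
      exact Submodule.sub_mem _ (y_mul_NS _ hv) (y_mul_NS _ hv)
    rw [sub_mul]
    exact Submodule.sub_mem _ (y_mul_NS _ hv1) (y_mul_NS _ hv1)
  · have h2 : ((y K (pos1 k) - y K (pos0 k)) * e K (act d i)) * TT K d ls i
        = (y K (pos1 k) - y K (pos0 k)) * (e K (act d i) * TT K d ls i) := by
      simp only [mul_assoc]
    rw [h2, sub_mul]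
    exact Submodule.sub_mem _ (y_mul_NS _ hv) (y_mul_NS _ hv)
  · have h2 : ((y K (pos0 k) - y K (pos1 k)) * e K (act d i)) * TT K d ls i
        = (y K (pos0 k) - y K (pos1 k)) * (e K (act d i) * TT K d ls i) := by
      simp only [mul_assoc]
    rw [h2, sub_mul]
    exact Submodule.sub_mem _ (y_mul_NS _ hv) (y_mul_NS _ hv)
  · exact hv

/-- the straightening span: reduced words with the same permutation. -/
noncomputable def SP (K : Type) [Field K] {n : ℕ} (c : List (Fin (n-1))) (i : KLRSeq n) :
    Submodule K (CKLR K n) :=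
  Submodule.span K {x : CKLR K n | ∃ c' ls', KLRperm.Reduced c' ∧
    KLRperm.wp c' = KLRperm.wp c ∧ x = TT K c' ls' i}

lemma NS_le_SP {d c : List (Fin (n-1))} {i : KLRSeq n} (hred : KLRperm.Reduced d)
    (hwp : KLRperm.wp d = KLRperm.wp c) : NS K d i ≤ SP K c i := by
  apply Submodule.span_le.mpr
  rintro x ⟨ls, rfl⟩
  exact Submodule.subset_span ⟨d, ls, hred, hwp, rfl⟩

lemma p_mul_SP (k : Fin (n-1)) {c : List (Fin (n-1))} {i : KLRSeq n} {v : CKLR K n}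
    (hv : v ∈ SP K c i) : p K k * v ∈ SP K (k :: c) i := by
  induction hv using Submodule.span_induction with
  | mem x hx =>
    obtain ⟨c', ls', hred, hwp, rfl⟩ := hx
    rcases lt_trichotomy ((KLRperm.wp c') (pos0 k)) ((KLRperm.wp c') (pos1 k))
      with hlt | heq | hgt
    · -- `k :: c'` is reduced
      have hred' : KLRperm.Reduced (k :: c') := by
        rw [KLRperm.Reduced, KLRperm.wp_cons, KLRperm.len_mul_sw_of_lt hlt,
          List.length_cons]
        rw [KLRperm.Reduced] at hred
        omega
      rw [← TT_cons]
      apply Submodule.subset_span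
      exact ⟨k :: c', ls', hred', by rw [KLRperm.wp_cons, KLRperm.wp_cons, hwp], rfl⟩
    · exact absurd ((KLRperm.wp c').injective heq)
        (ne_of_lt (KLRperm.pos0_lt_pos1 k))
    · -- non-reduced: rewrite `c'` as `k :: w` via Matsumoto and use the quadratic relation
      have hlen := KLRperm.len_mul_sw_of_gt hgt
      obtain ⟨w, hw1, hw2⟩ := KLRperm.exists_reduced_word (KLRperm.wp c' * KLRperm.sw k)
      have hkw : KLRperm.wp (k :: w) = KLRperm.wp c' := by
        rw [KLRperm.wp_cons, hw1, mul_assoc, KLRperm.sw_sw, mul_one]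
      have hkwred : KLRperm.Reduced (k :: w) := by
        rw [KLRperm.Reduced, hkw, List.length_cons, hw2]
        omega
      have hbd : KLRperm.Bd c' (k :: w) :=
        KLRperm.matsumoto c'.length c' (k :: w) le_rfl hred hkwred hkw.symm
      rw [bd_TT hbd, TT_cons]
      have hmem := sq_TT (K := K) k w ls' i
      have hwred : KLRperm.Reduced w := by
        rw [KLRperm.Reduced, hw1, hw2]
      have hle : NS K w i ≤ SP K (k :: c) i := by
        apply NS_le_SP hwred
        rw [hw1, KLRperm.wp_cons, hwp]
      exact hle hmem
  | zero => rw [mul_zero]; exact Submodule.zero_mem _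
  | add x y hx hy ihx ihy => rw [mul_add]; exact Submodule.add_mem _ ihx ihy
  | smul a x hx ih => rw [mul_smul_comm]; exact Submodule.smul_mem _ _ ih

lemma straight (c : List (Fin (n-1))) (ls : List (Fin n)) (i : KLRSeq n) :
    TT K c ls i ∈ SP K c i := by
  induction c generalizing ls with
  | nil =>
    apply Submodule.subset_span
    exact ⟨[], ls, by rw [KLRperm.Reduced, KLRperm.wp_nil, KLRperm.len_one]; rfl, rfl, rfl⟩
  | cons k c ih =>
    rw [TT_cons]
    exact p_mul_SP k (ih ls)

/-! ### the whole algebra is spanned by the monomials -/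

noncomputable def Mfull (K : Type) [Field K] (n : ℕ) : Submodule K (CKLR K n) :=
  Submodule.span K {x : CKLR K n | ∃ c ls j, x = TT K c ls j}

lemma TT_mem_Mfull (c : List (Fin (n-1))) (ls : List (Fin n)) (j : KLRSeq n) :
    TT K c ls j ∈ Mfull K n := Submodule.subset_span ⟨c, ls, j, rfl⟩

lemma e_mul_Mfull (j : KLRSeq n) {v : CKLR K n} (hv : v ∈ Mfull K n) :
    e K j * v ∈ Mfull K n := by
  induction hv using Submodule.span_induction with
  | mem x hx =>
    obtain ⟨c, ls, j', rfl⟩ := hx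
    rw [e_TT]
    split_ifs
    · exact TT_mem_Mfull _ _ _
    · exact Submodule.zero_mem _
  | zero => rw [mul_zero]; exact Submodule.zero_mem _
  | add x y hx hy ihx ihy => rw [mul_add]; exact Submodule.add_mem _ ihx ihy
  | smul a x hx ih => rw [mul_smul_comm]; exact Submodule.smul_mem _ _ ih

lemma y_mul_Mfull (l : Fin n) {v : CKLR K n} (hv : v ∈ Mfull K n) :
    y K l * v ∈ Mfull K n := by
  induction hv using Submodule.span_induction with
  | mem x hx =>
    obtain ⟨c, ls, j', rfl⟩ := hx
    rw [y_TT]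
    exact TT_mem_Mfull _ _ _
  | zero => rw [mul_zero]; exact Submodule.zero_mem _
  | add x y hx hy ihx ihy => rw [mul_add]; exact Submodule.add_mem _ ihx ihy
  | smul a x hx ih => rw [mul_smul_comm]; exact Submodule.smul_mem _ _ ih

lemma p_mul_Mfull (k : Fin (n-1)) {v : CKLR K n} (hv : v ∈ Mfull K n) :
    p K k * v ∈ Mfull K n := by
  induction hv using Submodule.span_induction with
  | mem x hx =>
    obtain ⟨c, ls, j', rfl⟩ := hx
    rw [← TT_cons]
    exact TT_mem_Mfull _ _ _
  | zero => rw [mul_zero]; exact Submodule.zero_mem _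
  | add x y hx hy ihx ihy => rw [mul_add]; exact Submodule.add_mem _ ihx ihy
  | smul a x hx ih => rw [mul_smul_comm]; exact Submodule.smul_mem _ _ ih

lemma mk_mul_Mfull (x : KLRFree K n) :
    ∀ v ∈ Mfull K n, KLR.mk K n x * v ∈ Mfull K n := by
  induction x using FreeAlgebra.induction with
  | grade0 r =>
    intro v hv
    rw [AlgHom.commutes, ← Algebra.smul_def]
    exact Submodule.smul_mem _ _ hv
  | grade1 g =>
    cases g with
    | e j => exact fun v hv => e_mul_Mfull j hv
    | y l => exact fun v hv => y_mul_Mfull l hv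
    | psi k => exact fun v hv => p_mul_Mfull k hv
  | mul a b iha ihb =>
    intro v hv
    rw [map_mul, mul_assoc]
    exact iha _ (ihb _ hv)
  | add a b iha ihb =>
    intro v hv
    rw [map_add, add_mul]
    exact Submodule.add_mem _ (iha v hv) (ihb v hv)

lemma Mfull_top (x : CKLR K n) : x ∈ Mfull K n := by
  obtain ⟨z, rfl⟩ := RingQuot.mkAlgHom_surjective K (Rel K n) x
  have h1 : (1 : CKLR K n) ∈ Mfull K n := by
    rw [← r_one (K := K) (n := n)]
    apply Submodule.sum_mem
    intro j _
    have he : e K j = TT K [] [] j := by rw [TT_nil, yL_nil, one_mul]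
    rw [he]
    exact TT_mem_Mfull _ _ _
  have h2 := mk_mul_Mfull z 1 h1
  rwa [mul_one] at h2

/-! ### the corner `e(i) R e(i)` -/

noncomputable def W (K : Type) [Field K] {n : ℕ} (i : KLRSeq n) : Submodule K (CKLR K n) :=
  Submodule.span K {x : CKLR K n | ∃ ls, x = yL K ls * e K i}

lemma SP_le_W {c : List (Fin (n-1))} (hc : KLRperm.wp c = 1) (i : KLRSeq n) :
    SP K c i ≤ W K i := by
  apply Submodule.span_le.mpr
  rintro x ⟨c', ls', hred, hwp, rfl⟩
  rw [hc] at hwp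
  have hnil : c' = [] := by
    rw [KLRperm.Reduced, hwp, KLRperm.len_one, List.length_eq_zero_iff] at hred
    exact hred
  subst hnil
  rw [TT_nil]
  exact Submodule.subset_span ⟨ls', rfl⟩

lemma eRe_mem (i : KLRSeq n) (x : CKLR K n) : e K i * (x * e K i) ∈ W K i := by
  have hx := Mfull_top x
  induction hx using Submodule.span_induction with
  | mem x hx =>
    obtain ⟨c, ls, j, rfl⟩ := hx
    rw [TT_mul_e]
    split_ifs with h
    · rw [e_TT]
      split_ifs with h2
      · exact SP_le_W (act_fix h2.symm) i (straight c ls i)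
      · exact Submodule.zero_mem _
    · rw [mul_zero]; exact Submodule.zero_mem _
  | zero => rw [zero_mul, mul_zero]; exact Submodule.zero_mem _
  | add x y hx hy ihx ihy =>
    rw [add_mul, mul_add]
    exact Submodule.add_mem _ ihx ihy
  | smul a x hx ih =>
    rw [smul_mul_assoc, mul_smul_comm]
    exact Submodule.smul_mem _ _ ih

/-! ### structure of the corner: commutative, spanned by `e(i)` and nilpotents -/

lemma yL_append (l1 l2 : List (Fin n)) : yL K (l1 ++ l2) = yL K l1 * yL K l2 := by
  simp [yL, List.prod_append]

lemma commute_y_yL (k : Fin n) (ls : List (Fin n)) : Commute (y K k) (yL K ls) := by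
  induction ls with
  | nil => exact Commute.one_right _
  | cons a t ih => exact (yL_cons (K := K) a t) ▸ ((commute_yy k a).mul_right ih)

lemma commute_yL_yL (l1 l2 : List (Fin n)) : Commute (yL K l1) (yL K l2) := by
  induction l1 with
  | nil => exact Commute.one_left _
  | cons a t ih => exact (yL_cons (K := K) a t) ▸ ((commute_y_yL a l2).mul_left ih)

lemma gen_mul (l1 l2 : List (Fin n)) (i : KLRSeq n) :
    (yL K l1 * e K i) * (yL K l2 * e K i) = yL K (l1 ++ l2) * e K i := by
  rw [yL_append]
  calc (yL K l1 * e K i) * (yL K l2 * e K i)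
      = yL K l1 * ((e K i * yL K l2) * e K i) := by simp only [mul_assoc]
    _ = yL K l1 * (yL K l2 * (e K i * e K i)) := by rw [(commute_e_yL i l2).eq, mul_assoc]
    _ = yL K l1 * (yL K l2 * e K i) := by rw [e_mul_self]
    _ = (yL K l1 * yL K l2) * e K i := by rw [← mul_assoc]

lemma comm_gen (l1 l2 : List (Fin n)) (i : KLRSeq n) :
    Commute (yL K l1 * e K i) (yL K l2 * e K i) := by
  show _ = _
  rw [gen_mul, gen_mul, yL_append, yL_append, (commute_yL_yL l1 l2).eq]

lemma W_comm_gen (l1 : List (Fin n)) (i : KLRSeq n) :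
    ∀ v ∈ W K i, Commute (yL K l1 * e K i) v := by
  intro v hv
  induction hv using Submodule.span_induction with
  | mem x hx => obtain ⟨ls, rfl⟩ := hx; exact comm_gen l1 ls i
  | zero => exact Commute.zero_right _
  | add x y hx hy ihx ihy => exact ihx.add_right ihy
  | smul a x hx ih => exact ih.smul_right a

lemma W_comm (i : KLRSeq n) : ∀ u ∈ W K i, ∀ v ∈ W K i, Commute u v := by
  intro u hu
  induction hu using Submodule.span_induction with
  | mem x hx =>
    obtain ⟨ls, rfl⟩ := hx
    exact fun v hv => W_comm_gen ls i v hv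
  | zero => exact fun v hv => Commute.zero_left _
  | add x y hx hy ihx ihy => exact fun v hv => (ihx v hv).add_left (ihy v hv)
  | smul a x hx ih => exact fun v hv => (ih v hv).smul_left a

lemma W_e_mul (i : KLRSeq n) : ∀ u ∈ W K i, e K i * u = u ∧ u * e K i = u := by
  intro u hu
  induction hu using Submodule.span_induction with
  | mem x hx =>
    obtain ⟨ls, rfl⟩ := hx
    constructor
    · rw [← mul_assoc, (commute_e_yL i ls).eq, mul_assoc, e_mul_self]
    · rw [mul_assoc, e_mul_self]
  | zero => simp
  | add x y hx hy ihx ihy =>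
    constructor
    · rw [mul_add, ihx.1, ihy.1]
    · rw [add_mul, ihx.2, ihy.2]
  | smul a x hx ih =>
    constructor
    · rw [mul_smul_comm, ih.1]
    · rw [smul_mul_assoc, ih.2]

noncomputable def Wp (K : Type) [Field K] {n : ℕ} (i : KLRSeq n) : Submodule K (CKLR K n) :=
  Submodule.span K {x : CKLR K n | ∃ ls, ls ≠ [] ∧ x = yL K ls * e K i}

lemma Wp_le_W (i : KLRSeq n) : Wp K i ≤ W K i := by
  apply Submodule.span_le.mpr
  rintro x ⟨ls, _, rfl⟩
  exact Submodule.subset_span ⟨ls, rfl⟩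

lemma e_mem_W (i : KLRSeq n) : e K i ∈ W K i :=
  Submodule.subset_span ⟨[], by rw [yL_nil, one_mul]⟩

lemma decompose (i : KLRSeq n) : ∀ u ∈ W K i, ∃ c : K, u - c • e K i ∈ Wp K i := by
  intro u hu
  induction hu using Submodule.span_induction with
  | mem x hx =>
    obtain ⟨ls, rfl⟩ := hx
    cases ls with
    | nil =>
      refine ⟨1, ?_⟩
      rw [yL_nil, one_mul, one_smul, sub_self]
      exact Submodule.zero_mem _
    | cons a t =>
      refine ⟨0, ?_⟩
      rw [zero_smul, sub_zero]
      exact Submodule.subset_span ⟨a :: t, List.cons_ne_nil _ _, rfl⟩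
  | zero => exact ⟨0, by rw [zero_smul, sub_zero]; exact Submodule.zero_mem _⟩
  | add x y hx hy ihx ihy =>
    obtain ⟨c1, hc1⟩ := ihx
    obtain ⟨c2, hc2⟩ := ihy
    refine ⟨c1 + c2, ?_⟩
    have heq : x + y - (c1 + c2) • e K i = (x - c1 • e K i) + (y - c2 • e K i) := by
      rw [add_smul]; abel
    rw [heq]
    exact Submodule.add_mem _ hc1 hc2
  | smul a x hx ih =>
    obtain ⟨c, hc⟩ := ih
    refine ⟨a * c, ?_⟩
    have heq : a • x - (a * c) • e K i = a • (x - c • e K i) := by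
      rw [smul_sub, mul_smul]
    rw [heq]
    exact Submodule.smul_mem _ _ hc

lemma pow_gen (ls : List (Fin n)) (i : KLRSeq n) (m : ℕ) :
    (yL K ls * e K i) ^ (m + 1) = yL K ((List.replicate (m + 1) ls).flatten) * e K i := by
  induction m with
  | zero => simp
  | succ m ih =>
    rw [pow_succ', ih, gen_mul]
    conv_rhs => rw [List.replicate_succ, List.flatten_cons]

lemma count_join_replicate (k : Fin n) (ls : List (Fin n)) (m : ℕ) :
    ((List.replicate m ls).flatten).count k = m * ls.count k := by
  induction m with
  | zero => simp
  | succ m ih =>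
    rw [List.replicate_succ, List.flatten_cons, List.count_append, ih]
    ring

lemma yL_count_split (k : Fin n) (ls : List (Fin n)) :
    yL K ls = y K k ^ (ls.count k) * yL K (ls.filter (fun x => x ≠ k)) := by
  induction ls with
  | nil => simp
  | cons x t ih =>
    rcases eq_or_ne x k with rfl | hx
    · rw [yL_cons, ih, ← mul_assoc, ← pow_succ']
      have h1 : (x :: t).count x = t.count x + 1 := by simp
      have h2 : (x :: t).filter (fun z => z ≠ x) = t.filter (fun z => z ≠ x) := by
        simp [List.filter_cons]
      rw [h1, h2]
    · rw [yL_cons, ih, ← mul_assoc, ((commute_yy x k).pow_right (t.count k)).eq, mul_assoc,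
        ← yL_cons]
      have h1 : (x :: t).count k = t.count k := by
        rw [List.count_cons]
        simp [hx]
      have h2 : (x :: t).filter (fun z => z ≠ k) = x :: t.filter (fun z => z ≠ k) := by
        simp [List.filter_cons, hx]
      rw [h1, h2]

lemma gen_nilpotent {ls : List (Fin n)} (hls : ls ≠ []) (i : KLRSeq n)
    {N : ℕ} (hN : ∀ k : Fin n, y K k ^ N = 0) :
    (yL K ls * e K i) ^ (N + 1) = 0 := by
  obtain ⟨x, t, rfl⟩ := List.exists_cons_of_ne_nil hls
  rw [pow_gen]
  set L := (List.replicate (N + 1) (x :: t)).flatten with hL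
  have hcount : N ≤ L.count x := by
    rw [hL, count_join_replicate]
    have h1 : 1 ≤ (x :: t).count x := by simp
    calc N ≤ (N + 1) * 1 := by omega
      _ ≤ (N + 1) * (x :: t).count x := Nat.mul_le_mul_left _ h1
  have hz : y K x ^ (L.count x) = 0 := by
    rw [show L.count x = (L.count x - N) + N by omega, pow_add, hN, mul_zero]
  rw [yL_count_split x L, hz, zero_mul, zero_mul]

lemma Wp_nilpotent (hn2 : 2 ≤ n) (i : KLRSeq n) :
    ∀ v ∈ Wp K i, IsNilpotent v := by
  obtain ⟨N, hN0, hN⟩ := y_global_nil (K := K) hn2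
  intro v hv
  induction hv using Submodule.span_induction with
  | mem x hx =>
    obtain ⟨ls, hne, rfl⟩ := hx
    exact ⟨N + 1, gen_nilpotent hne i hN⟩
  | zero => exact IsNilpotent.zero
  | add x y hx hy ihx ihy =>
    exact Commute.isNilpotent_add
      (W_comm i x (Wp_le_W i hx) y (Wp_le_W i hy)) ihx ihy
  | smul a x hx ih =>
    obtain ⟨m, hm⟩ := ih
    exact ⟨m, by rw [smul_pow, hm, smul_zero]⟩

end KLRstmt


/-- for `n ≥ 2`, the elements `e(i)` form a complete set of primitive
pairwise orthogonal idempotents of `R_n`: each `e(i)` is idempotent, they are pairwise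
orthogonal, they sum to `1`, and every nonzero `e(i)` is primitive (not a sum of two
nonzero orthogonal idempotents). -/
theorem stmt_1 (K : Type) [Field K] (n : ℕ) (hn : 2 ≤ n) :
    (∀ i : KLRSeq n, IsIdempotentElem (KLR.e K i)) ∧
    (∀ i j : KLRSeq n, i ≠ j → KLR.e K i * KLR.e K j = 0) ∧
    (∑ i : KLRSeq n, KLR.e K i) = 1 ∧
    (∀ i : KLRSeq n, KLR.e K i ≠ 0 →
      ¬ ∃ f₁ f₂ : CKLR K n, f₁ ≠ 0 ∧ f₂ ≠ 0 ∧ IsIdempotentElem f₁ ∧ IsIdempotentElem f₂ ∧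
        f₁ * f₂ = 0 ∧ f₂ * f₁ = 0 ∧ KLR.e K i = f₁ + f₂) := by
  classical
  refine ⟨fun i => KLRstmt.e_mul_self i, fun i j h => KLRstmt.e_mul_ne h, KLRstmt.r_one, ?_⟩
  intro i hi
  rintro ⟨f₁, f₂, hf₁, hf₂, hI₁, hI₂, h12, h21, hsum⟩
  have htriv : (1 : CKLR K n) ≠ 0 := by
    intro h
    apply hi
    rw [← mul_one (KLR.e K i), h, mul_zero]
  -- f₁ lies in the corner e(i) R e(i) ⊆ W i
  have ef1 : KLR.e K i * f₁ = f₁ := by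
    rw [hsum, add_mul, hI₁.eq, h21, add_zero]
  have f1e : f₁ * KLR.e K i = f₁ := by
    rw [hsum, mul_add, hI₁.eq, h12, add_zero]
  have hf1W : f₁ ∈ KLRstmt.W K i := by
    have h := KLRstmt.eRe_mem (K := K) i f₁
    rwa [f1e, ef1] at h
  obtain ⟨c, hc⟩ := KLRstmt.decompose (K := K) i f₁ hf1W
  set v := f₁ - c • KLR.e K i with hv
  have hvW : v ∈ KLRstmt.W K i := KLRstmt.Wp_le_W i hc
  have hvnil : IsNilpotent v := KLRstmt.Wp_nilpotent hn i v hc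
  have hev := KLRstmt.W_e_mul (K := K) i v hvW
  have hf1 : f₁ = c • KLR.e K i + v := by rw [hv]; abel
  -- idempotency gives (c² - c) • e(i) = nilpotent
  have expand : (c • KLR.e K i + v) * (c • KLR.e K i + v)
      = (c * c) • KLR.e K i + ((c + c) • v + v * v) := by
    rw [add_mul, mul_add, mul_add, smul_mul_assoc, smul_mul_assoc, mul_smul_comm,
      mul_smul_comm, smul_smul, KLRstmt.e_mul_self, hev.1, hev.2, add_smul]
    abel
  have h0 : (c * c) • KLR.e K i + ((c + c) • v + v * v) = c • KLR.e K i + v := by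
    rw [← expand, ← hf1, hI₁.eq, hf1]
  have hkey : (c * c - c) • KLR.e K i = (1 - (c + c)) • v - v * v := by
    rw [sub_smul (c * c) c (KLR.e K i), eq_sub_of_add_eq h0, sub_smul (1 : K) (c + c) v, one_smul]
    abel
  have hnil2 : IsNilpotent ((1 - (c + c)) • v - v * v) := by
    have h1 : IsNilpotent ((1 - (c + c)) • v) := by
      obtain ⟨m, hm⟩ := hvnil
      exact ⟨m, by rw [smul_pow, hm, smul_zero]⟩
    have h2 : IsNilpotent (v * v) := (Commute.refl v).isNilpotent_mul_left hvnil
    have hcomm : Commute ((1 - (c + c)) • v) (v * v) :=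
      (((Commute.refl v).mul_right (Commute.refl v)).smul_left _)
    exact hcomm.isNilpotent_sub h1 h2
  have hge : IsNilpotent ((c * c - c) • KLR.e K i) := by rw [hkey]; exact hnil2
  obtain ⟨M, hM⟩ := hge
  have hM0 : M ≠ 0 := by
    rintro rfl
    rw [pow_zero] at hM
    exact htriv hM
  -- deduce c² = c
  have idem_pow : ∀ (g : CKLR K n), g * g = g → ∀ t, g ^ (t + 1) = g := by
    intro g hg t
    induction t with
    | zero => rw [pow_one]
    | succ t ih => rw [pow_succ, ih, hg]
  have heM : (KLR.e K i) ^ M = KLR.e K i := by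
    rw [show M = (M - 1) + 1 by omega]
    exact idem_pow _ (KLRstmt.e_mul_self i) _
  rw [smul_pow, heM] at hM
  have hsmul : ∀ (a : K) (z : CKLR K n), a • z = 0 → a ≠ 0 → z = 0 := by
    intro a z h ha
    have h2 := congrArg (fun t => a⁻¹ • t) h
    simpa [smul_smul, inv_mul_cancel₀ ha] using h2
  have hcM : (c * c - c) ^ M = 0 := by
    by_contra hcc
    exact hi (hsmul _ _ hM hcc)
  have hccc : c * c - c = 0 := by
    by_contra hne
    exact (pow_ne_zero M hne) hcM
  have hcases : c = 0 ∨ c = 1 := by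
    have hfac : c * (c - 1) = 0 := by rw [← hccc]; ring
    rcases mul_eq_zero.mp hfac with h | h
    · exact Or.inl h
    · exact Or.inr (sub_eq_zero.mp h)
  have idemnil : ∀ g : CKLR K n, g * g = g → IsNilpotent g → g = 0 := by
    rintro g hg ⟨m, hm⟩
    rcases Nat.eq_zero_or_pos m with rfl | hm0
    · rw [pow_zero] at hm
      exact absurd hm htriv
    · rw [← idem_pow g hg (m - 1), show m - 1 + 1 = m by omega, hm]
  rcases hcases with rfl | rfl
  · have hfv : f₁ = v := by rw [hv, zero_smul, sub_zero]
    exact hf₁ (idemnil f₁ hI₁.eq (hfv ▸ hvnil))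
  · have hf2 : f₂ = -v := by
      have h3 : f₂ = KLR.e K i - f₁ := by rw [hsum]; abel
      rw [h3, hf1, one_smul]
      abel
    exact hf₂ (idemnil f₂ hI₂.eq (hf2 ▸ hvnil.neg))
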